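/- Let k ≥ 1. Let b(n;k) be the number of words σ : Fin n → Fin k containing no occurrence of the pattern 1'-2-1'', i.e., no indices i < j < l such that σ(i) < σ(j) and σ(l) < σ(j). Then in the ring of formal power series ℚ[[x]], the generating function B_k(x) = Σ_{n≥0} b(n;k)·xⁿ satisfies B_k(x) = 1/(1−x)^{2k−1} − Σ_{j=1}^{k−1} x/(1−x)^{2j} (equivalently, (1−x)^{2k−1}·B_k(x) = 1 − Σ_{j=1}^{k−1} x·(1−x)^{2k−1−2j}). -/

import Mathlib

open Finset

/-- A word `σ : Fin n → Fin k` avoids the partially ordered pattern 1'-2-1'':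
there are no indices `i < j < l` with `σ i < σ j` and `σ l < σ j`. -/
def Avoids121 {n k : ℕ} (σ : Fin n → Fin k) : Prop :=
  ¬ ∃ i j l : Fin n, i < j ∧ j < l ∧ σ i < σ j ∧ σ l < σ j

section Valley
variable {N k : ℕ}

/-- first position achieving the minimum value -/
def qf (σ : Fin (N+1) → Fin k) : Fin (N+1) :=
  (univ.filter (fun i => ∀ i', σ i ≤ σ i')).min' (by
    obtain ⟨b, _, hb⟩ := Finset.exists_min_image univ σ ⟨0, mem_univ 0⟩
    exact ⟨b, by simpa using fun i' => hb i' (mem_univ _)⟩)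

lemma qf_min (σ : Fin (N+1) → Fin k) (i : Fin (N+1)) : σ (qf σ) ≤ σ i := by
  have := Finset.min'_mem (univ.filter (fun i => ∀ i', σ i ≤ σ i')) (by
    obtain ⟨b, _, hb⟩ := Finset.exists_min_image univ σ ⟨0, mem_univ 0⟩
    exact ⟨b, by simpa using fun i' => hb i' (mem_univ _)⟩)
  rw [mem_filter] at this
  exact this.2 i

lemma qf_first (σ : Fin (N+1) → Fin k) (i : Fin (N+1)) (h : i < qf σ) : σ (qf σ) < σ i := by
  rcases lt_or_eq_of_le (qf_min σ i) with h' | h'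
  · exact h'
  · exfalso
    have hi : i ∈ univ.filter (fun i => ∀ i', σ i ≤ σ i') := by
      simp only [mem_filter, mem_univ, true_and]
      intro i'; rw [← h']; exact qf_min σ i'
    exact absurd (Finset.min'_le _ _ hi) (not_le.mpr h)

lemma valley_left {σ : Fin (N+1) → Fin k} (hav : Avoids121 σ) {x y : Fin (N+1)}
    (hxy : x ≤ y) (hyq : y ≤ qf σ) : σ y ≤ σ x := by
  by_contra hc
  push_neg at hc
  have hyq' : y < qf σ := by
    rcases lt_or_eq_of_le hyq with h | h
    · exact h
    · exfalso; rw [h] at hc; exact absurd (qf_min σ x) (not_le.mpr hc)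
  have hxy' : x < y := by
    rcases lt_or_eq_of_le hxy with h | h
    · exact h
    · exfalso; rw [h] at hc; exact lt_irrefl _ hc
  exact hav ⟨x, y, qf σ, hxy', hyq', hc, qf_first σ y hyq'⟩

lemma valley_right {σ : Fin (N+1) → Fin k} (hav : Avoids121 σ) {x y : Fin (N+1)}
    (hqx : qf σ ≤ x) (hxy : x ≤ y) : σ x ≤ σ y := by
  by_contra hc
  push_neg at hc
  have hqx' : qf σ < x := by
    rcases lt_or_eq_of_le hqx with h | h
    · exact h
    · exfalso; rw [← h] at hc; exact absurd (qf_min σ y) (not_le.mpr hc)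
  have hxy' : x < y := by
    rcases lt_or_eq_of_le hxy with h | h
    · exact h
    · exfalso; rw [h] at hc; exact lt_irrefl _ hc
  refine hav ⟨qf σ, x, y, hqx', hxy', ?_, hc⟩
  exact lt_of_le_of_lt (qf_min σ y) hc

lemma avoids_of_valley (σ : Fin (N+1) → Fin k) (q : Fin (N+1))
    (hA : ∀ x y : Fin (N+1), x ≤ y → y ≤ q → σ y ≤ σ x)
    (hM : ∀ x y : Fin (N+1), q ≤ x → x ≤ y → σ x ≤ σ y) : Avoids121 σ := by
  rintro ⟨i, j, l, hij, hjl, h1, h2⟩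
  rcases le_total j q with h | h
  · exact absurd (hA i j hij.le h) (not_le.mpr h1)
  · exact absurd (hM j l h hjl.le) (not_le.mpr h2)

end Valley

section Cut
variable {N : ℕ}

lemma card_filter_val_lt (N t : ℕ) (ht : t ≤ N) :
    (univ.filter fun i : Fin N => (i : ℕ) < t).card = t := by
  have h : (univ.filter fun i : Fin N => (i : ℕ) < t)
      = (Finset.range t).attachFin (fun m hm => lt_of_lt_of_le (Finset.mem_range.mp hm) ht) := by
    ext i
    simp [Finset.mem_attachFin]
  rw [h, Finset.card_attachFin, Finset.card_range]

/-- number of indices where `g` is below threshold `t` -/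
def cutOf (g : Fin N → ℕ) (t : ℕ) : ℕ := (univ.filter fun i => g i < t).card

lemma cutOf_le (g : Fin N → ℕ) (t : ℕ) : cutOf g t ≤ N := by
  simpa [cutOf] using (Finset.card_filter_le univ fun i => g i < t)

lemma cutOf_iff {g : Fin N → ℕ} (hg : ∀ a b : Fin N, a ≤ b → g a ≤ g b) (t : ℕ) (i : Fin N) :
    g i < t ↔ (i : ℕ) < cutOf g t := by
  constructor
  · intro h
    have hsub : (univ.filter fun i' : Fin N => (i' : ℕ) < (i : ℕ) + 1)
        ⊆ (univ.filter fun i' => g i' < t) := by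
      intro i' hi'
      simp only [mem_filter, mem_univ, true_and] at hi' ⊢
      exact lt_of_le_of_lt (hg i' i (by omega)) h
    have := Finset.card_le_card hsub
    rw [card_filter_val_lt N ((i:ℕ)+1) i.isLt] at this
    simpa [cutOf] using this
  · intro h
    by_contra hc
    push_neg at hc
    have hsub : (univ.filter fun i' : Fin N => g i' < t)
        ⊆ (univ.filter fun i' : Fin N => (i' : ℕ) < (i : ℕ)) := by
      intro i' hi'
      simp only [mem_filter, mem_univ, true_and] at hi' ⊢
      by_contra hge
      push_neg at hge
      exact absurd (lt_of_le_of_lt (le_trans hc (hg i i' (by omega))) hi') (lt_irrefl t)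
    have := Finset.card_le_card hsub
    rw [card_filter_val_lt N (i:ℕ) i.isLt.le] at this
    simp only [cutOf] at h
    omega

end Cut

section Code
variable {N k : ℕ}

/-- encode a valley word as a monotone word over `2j+1` letters (ℕ-valued) -/
def gOf (σ : Fin (N+1) → Fin k) (i : Fin N) : ℕ :=
  if (i : ℕ) < (qf σ : ℕ) then (k - 1) - (σ i.castSucc : ℕ)
  else (k - 1 - (σ (qf σ) : ℕ)) + ((σ i.succ : ℕ) - (σ (qf σ) : ℕ))

/-- decode: `j` the coded minimum, `g` a monotone word over `2j+1` letters -/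
def sOf (k j : ℕ) (g : Fin N → ℕ) (x : Fin (N+1)) : ℕ :=
  if h : (x : ℕ) < cutOf g j then k - 1 - g ⟨x, lt_of_lt_of_le h (cutOf_le g j)⟩
  else if h2 : (x : ℕ) = cutOf g j then k - 1 - j
  else (k - 1 - j) + (g ⟨(x : ℕ) - 1, by
    have h1 := x.isLt
    have h3 := cutOf_le g j
    omega⟩ - j)

lemma gOf_lt (σ : Fin (N+1) → Fin k) (i : Fin N) :
    gOf σ i < 2 * (k - 1 - (σ (qf σ) : ℕ)) + 1 := by
  unfold gOf
  split_ifs with h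
  · have h1 : (σ (qf σ) : ℕ) < (σ i.castSucc : ℕ) := by
      have := qf_first σ i.castSucc (by rw [Fin.lt_def]; simpa using h)
      exact this
    have h2 := (σ i.castSucc).isLt
    omega
  · have h1 : (σ (qf σ) : ℕ) ≤ (σ i.succ : ℕ) := qf_min σ i.succ
    have h2 := (σ i.succ).isLt
    have h3 := (σ (qf σ)).isLt
    omega

lemma gOf_mono {σ : Fin (N+1) → Fin k} (hav : Avoids121 σ) (a b : Fin N) (hab : a ≤ b) :
    gOf σ a ≤ gOf σ b := by
  have hab' : (a : ℕ) ≤ (b : ℕ) := hab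
  have hm := (σ (qf σ)).isLt
  unfold gOf
  split_ifs with ha hb hb
  · -- both before q : use antitone part
    have := valley_left hav (x := a.castSucc) (y := b.castSucc)
      (by rw [Fin.le_def]; simpa using hab') (by rw [Fin.le_def]; simpa using hb.le)
    have h2 := (σ a.castSucc).isLt
    omega
  · -- a before, b after
    have h1 : (σ (qf σ) : ℕ) < (σ a.castSucc : ℕ) :=
      qf_first σ a.castSucc (by rw [Fin.lt_def]; simpa using ha)
    have h2 := (σ a.castSucc).isLt
    omega
  · omega
  · have := valley_right hav (x := a.succ) (y := b.succ)
      (by rw [Fin.le_def]; simp; omega) (by rw [Fin.le_def]; simp; omega)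
    have h1 : (σ (qf σ) : ℕ) ≤ (σ a.succ : ℕ) := qf_min σ a.succ
    have h2 : (σ (qf σ) : ℕ) ≤ (σ b.succ : ℕ) := qf_min σ b.succ
    omega

lemma sOf_pos (k j : ℕ) (g : Fin N → ℕ) (x : Fin (N+1)) (h : (x : ℕ) < cutOf g j) :
    sOf k j g x = k - 1 - g ⟨x, lt_of_lt_of_le h (cutOf_le g j)⟩ := by
  unfold sOf; rw [dif_pos h]

lemma sOf_mid (k j : ℕ) (g : Fin N → ℕ) (x : Fin (N+1)) (h : (x : ℕ) = cutOf g j) :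
    sOf k j g x = k - 1 - j := by
  unfold sOf; rw [dif_neg (by omega), dif_pos h]

lemma sOf_big (k j : ℕ) (g : Fin N → ℕ) (x : Fin (N+1)) (h : cutOf g j < (x : ℕ)) :
    sOf k j g x = (k - 1 - j) + (g ⟨(x : ℕ) - 1, by
      have := x.isLt; have := cutOf_le g j; omega⟩ - j) := by
  unfold sOf; rw [dif_neg (by omega), dif_neg (by omega)]

lemma sOf_lt {j : ℕ} (hj : j < k) {g : Fin N → ℕ} (hgb : ∀ i, g i < 2 * j + 1)
    (x : Fin (N+1)) : sOf k j g x < k := by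
  unfold sOf
  split_ifs with h1 h2
  · omega
  · omega
  · have := hgb ⟨(x : ℕ) - 1, by have h1' := x.isLt; have h3' := cutOf_le g j; omega⟩
    omega

lemma cut_gOf (σ : Fin (N+1) → Fin k) :
    cutOf (gOf σ) (k - 1 - (σ (qf σ) : ℕ)) = (qf σ : ℕ) := by
  have hm := (σ (qf σ)).isLt
  have hfil : (univ.filter fun i : Fin N => gOf σ i < k - 1 - (σ (qf σ) : ℕ))
      = univ.filter fun i : Fin N => (i : ℕ) < (qf σ : ℕ) := by
    ext i
    simp only [mem_filter, mem_univ, true_and]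
    constructor
    · intro h
      by_contra hge
      push_neg at hge
      unfold gOf at h
      rw [if_neg (by omega)] at h
      omega
    · intro h
      unfold gOf
      rw [if_pos h]
      have h1 : (σ (qf σ) : ℕ) < (σ i.castSucc : ℕ) :=
        qf_first σ i.castSucc (by rw [Fin.lt_def]; simpa using h)
      have h2 := (σ i.castSucc).isLt
      omega
  unfold cutOf
  rw [hfil, card_filter_val_lt N _ (by have := (qf σ).isLt; omega)]

lemma sOf_gOf (σ : Fin (N+1) → Fin k) (x : Fin (N+1)) :
    sOf k (k - 1 - (σ (qf σ) : ℕ)) (gOf σ) x = (σ x : ℕ) := by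
  have hm := (σ (qf σ)).isLt
  have hx := (σ x).isLt
  rcases lt_trichotomy (x : ℕ) ((qf σ) : ℕ) with h | h | h
  · rw [sOf_pos _ _ _ _ (by rw [cut_gOf]; exact h)]
    have harg : ∀ p, gOf σ (⟨(x : ℕ), p⟩ : Fin N) = (k - 1) - (σ x : ℕ) := by
      intro p
      unfold gOf
      rw [if_pos (by simpa using h)]
      have hcs : (⟨(x : ℕ), p⟩ : Fin N).castSucc = x := Fin.ext (by simp)
      rw [hcs]
    rw [harg]
    have h3 : (σ (qf σ) : ℕ) < (σ x : ℕ) := qf_first σ x (by rw [Fin.lt_def]; exact h)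
    omega
  · rw [sOf_mid _ _ _ _ (by rw [cut_gOf]; exact h)]
    have : x = qf σ := Fin.ext h
    rw [this]
    omega
  · rw [sOf_big _ _ _ _ (by rw [cut_gOf]; exact h)]
    have harg : ∀ p, gOf σ (⟨(x : ℕ) - 1, p⟩ : Fin N)
        = (k - 1 - (σ (qf σ) : ℕ)) + ((σ x : ℕ) - (σ (qf σ) : ℕ)) := by
      intro p
      unfold gOf
      rw [if_neg (by simp; omega)]
      have : ((⟨(x : ℕ) - 1, p⟩ : Fin N).succ) = x := by
        apply Fin.ext; simp; omega
      rw [this]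
    rw [harg]
    have h3 : (σ (qf σ) : ℕ) ≤ (σ x : ℕ) := qf_min σ x
    omega

section Decode
variable {j : ℕ} (hj : j < k) {g : Fin N → ℕ} (hgb : ∀ i, g i < 2 * j + 1)
  (hg : ∀ a b : Fin N, a ≤ b → g a ≤ g b)

/-- the decoded word -/
def decode (j : ℕ) (hj : j < k) (g : Fin N → ℕ) (hgb : ∀ i, g i < 2 * j + 1) :
    Fin (N+1) → Fin k :=
  fun x => ⟨sOf k j g x, sOf_lt hj hgb x⟩

lemma decode_val (x : Fin (N+1)) : (decode j hj g hgb x : ℕ) = sOf k j g x := rfl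

include hg

lemma decode_ge_min (x : Fin (N+1)) : k - 1 - j ≤ (decode j hj g hgb x : ℕ) := by
  rw [decode_val]
  rcases lt_trichotomy (x : ℕ) (cutOf g j) with h | h | h
  · rw [sOf_pos _ _ _ _ h]
    have : g ⟨x, lt_of_lt_of_le h (cutOf_le g j)⟩ < j := (cutOf_iff hg j _).mpr (by simpa using h)
    omega
  · rw [sOf_mid _ _ _ _ h]
  · rw [sOf_big _ _ _ _ h]
    omega

lemma decode_strict (x : Fin (N+1)) (h : (x : ℕ) < cutOf g j) :
    k - 1 - j < (decode j hj g hgb x : ℕ) := by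
  rw [decode_val, sOf_pos _ _ _ _ h]
  have h1 : g ⟨x, lt_of_lt_of_le h (cutOf_le g j)⟩ < j := (cutOf_iff hg j _).mpr (by simpa using h)
  have := hj
  omega

lemma decode_valley_left (x y : Fin (N+1)) (hxy : x ≤ y) (hy : (y : ℕ) ≤ cutOf g j) :
    (decode j hj g hgb y : ℕ) ≤ (decode j hj g hgb x : ℕ) := by
  have hxy' : (x : ℕ) ≤ (y : ℕ) := hxy
  rcases lt_or_eq_of_le hy with h | h
  · have hx : (x : ℕ) < cutOf g j := by omega
    rw [decode_val, decode_val, sOf_pos _ _ _ _ hx, sOf_pos _ _ _ _ h]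
    have := hg ⟨x, lt_of_lt_of_le hx (cutOf_le g j)⟩ ⟨y, lt_of_lt_of_le h (cutOf_le g j)⟩
      (Fin.mk_le_mk.mpr (by omega))
    omega
  · rw [decode_val, sOf_mid _ _ _ _ h]
    exact decode_ge_min hj hgb hg x

lemma decode_valley_right (x y : Fin (N+1)) (hx : cutOf g j ≤ (x : ℕ)) (hxy : x ≤ y) :
    (decode j hj g hgb x : ℕ) ≤ (decode j hj g hgb y : ℕ) := by
  have hxy' : (x : ℕ) ≤ (y : ℕ) := hxy
  rcases lt_or_eq_of_le hx with h | h
  · have hy : cutOf g j < (y : ℕ) := by omega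
    rw [decode_val, decode_val, sOf_big _ _ _ _ h, sOf_big _ _ _ _ hy]
    have := hg ⟨(x:ℕ) - 1, by have := x.isLt; have := cutOf_le g j; omega⟩
      ⟨(y:ℕ) - 1, by have := y.isLt; have := cutOf_le g j; omega⟩ (Fin.mk_le_mk.mpr (by omega))
    omega
  · rw [decode_val, sOf_mid _ _ _ _ h.symm]
    exact decode_ge_min hj hgb hg y

lemma decode_avoids : Avoids121 (decode j hj g hgb) := by
  apply avoids_of_valley _ ⟨cutOf g j, by have := cutOf_le g j; omega⟩
  · intro x y hxy hyq
    rw [Fin.le_def]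
    exact decode_valley_left hj hgb hg x y hxy hyq
  · intro x y hqx hxy
    rw [Fin.le_def]
    exact decode_valley_right hj hgb hg x y hqx hxy

lemma qf_decode : qf (decode j hj g hgb) = ⟨cutOf g j, by have := cutOf_le g j; omega⟩ := by
  set c : Fin (N+1) := ⟨cutOf g j, by have := cutOf_le g j; omega⟩ with hc
  have hcval : (c : ℕ) = cutOf g j := rfl
  have hcmem : c ∈ univ.filter
      (fun i => ∀ i', decode j hj g hgb i ≤ decode j hj g hgb i') := by
    simp only [mem_filter, mem_univ, true_and]
    intro i'
    rw [Fin.le_def, decode_val, sOf_mid _ _ _ _ hcval]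
    exact decode_ge_min hj hgb hg i'
  apply le_antisymm
  · unfold qf
    exact Finset.min'_le _ c hcmem
  · unfold qf
    apply Finset.le_min'
    intro y hy
    simp only [mem_filter, mem_univ, true_and] at hy
    by_contra hlt
    push_neg at hlt
    have h1 : (y : ℕ) < cutOf g j := hlt
    have h2 := decode_strict hj hgb hg y h1
    rw [decode_val] at h2
    have h3 := hy c
    rw [Fin.le_def, decode_val, decode_val, sOf_mid _ _ _ _ hcval] at h3
    omega

lemma decode_min_val :
    ((decode j hj g hgb) (qf (decode j hj g hgb)) : ℕ) = k - 1 - j := by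
  have hq := qf_decode hj hgb hg
  have hqval : ((qf (decode j hj g hgb)) : ℕ) = cutOf g j := by rw [hq]
  rw [decode_val, sOf_mid _ _ _ _ hqval]

lemma gOf_decode (i : Fin N) : gOf (decode j hj g hgb) i = g i := by
  have hq := qf_decode hj hgb hg
  have hqval : ((qf (decode j hj g hgb)) : ℕ) = cutOf g j := by rw [hq]
  have hmval : ((decode j hj g hgb) (qf (decode j hj g hgb)) : ℕ) = k - 1 - j := by
    rw [decode_val, sOf_mid _ _ _ _ hqval]
  unfold gOf
  rw [hqval, hmval]
  by_cases h : (i : ℕ) < cutOf g j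
  · rw [if_pos (by simpa using h)]
    have hcs : ((i.castSucc : Fin (N+1)) : ℕ) < cutOf g j := by simpa using h
    rw [decode_val, sOf_pos _ _ _ _ hcs]
    have harg : ∀ p, g (⟨((i.castSucc : Fin (N+1)) : ℕ), p⟩ : Fin N) = g i :=
      fun p => congrArg g (Fin.ext (by simp))
    rw [harg]
    have hgi : g i < j := (cutOf_iff hg j i).mpr h
    have := hj
    omega
  · rw [if_neg (by simpa using h)]
    have hsv : cutOf g j < ((i.succ : Fin (N+1)) : ℕ) := by simp; omega
    rw [decode_val, sOf_big _ _ _ _ hsv]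
    have harg : ∀ p, g (⟨((i.succ : Fin (N+1)) : ℕ) - 1, p⟩ : Fin N) = g i :=
      fun p => congrArg g (Fin.ext (by simp))
    rw [harg]
    have hgi : ¬ g i < j := fun hc => h ((cutOf_iff hg j i).mp hc)
    have hb := hgb i
    omega

end Decode

private lemma sigma_eq' {k c : ℕ} {F : ℕ → ℕ} (a a' : Fin k)
    (b : {g : Fin c → Fin (F (a : ℕ)) // Monotone g}) (b' : {g : Fin c → Fin (F (a' : ℕ)) // Monotone g})
    (h : a = a') (hfun : ∀ i, ((b.1 i : ℕ)) = (b'.1 i : ℕ)) :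
    (⟨a, b⟩ : Σ j : Fin k, {g : Fin c → Fin (F (j : ℕ)) // Monotone g}) = ⟨a', b'⟩ := by
  subst h
  exact congrArg _ (Subtype.ext (funext fun i => Fin.ext (hfun i)))

def valleyEquiv (N k : ℕ) :
    {σ : Fin (N+1) → Fin k // Avoids121 σ} ≃
      Σ j : Fin k, {g : Fin N → Fin (2 * (j : ℕ) + 1) // Monotone g} where
  toFun σ :=
    ⟨⟨k - 1 - (σ.1 (qf σ.1) : ℕ), by have := (σ.1 (qf σ.1)).isLt; omega⟩,
     ⟨fun i => ⟨gOf σ.1 i, gOf_lt σ.1 i⟩,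
      fun a b hab => Fin.mk_le_mk.mpr (gOf_mono σ.2 a b hab)⟩⟩
  invFun x :=
    ⟨decode (x.1 : ℕ) x.1.isLt (fun i => (x.2.1 i : ℕ)) (fun i => (x.2.1 i).isLt),
     decode_avoids x.1.isLt (fun i => (x.2.1 i).isLt)
       (fun a b hab => Fin.le_def.mp (x.2.2 hab))⟩
  left_inv σ := Subtype.ext (funext fun x => Fin.ext (sOf_gOf σ.1 x))
  right_inv := by
    rintro ⟨j, g, hgmono⟩
    have hj : (j : ℕ) < k := j.isLt
    have hgb : ∀ i, ((fun i => (g i : ℕ)) i) < 2 * (j : ℕ) + 1 := fun i => (g i).isLt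
    have hg : ∀ a b : Fin N, a ≤ b → (fun i => (g i : ℕ)) a ≤ (fun i => (g i : ℕ)) b :=
      fun a b hab => Fin.le_def.mp (hgmono hab)
    refine sigma_eq' (F := fun t => 2 * t + 1) _ _ _ _ (Fin.ext ?_) (fun i => ?_)
    · show k - 1 - _ = (j : ℕ)
      rw [decode_min_val hj hgb hg]
      omega
    · show gOf _ i = (g i : ℕ)
      exact gOf_decode hj hgb hg i

end Code

/-- Monotone words `Fin n → Fin c` are equinumerous with multisets. -/
def monoEquivSym (n c : ℕ) : {g : Fin n → Fin c // Monotone g} ≃ Sym (Fin c) n where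
  toFun f := ⟨(List.ofFn f.1 : Multiset (Fin c)), by simp⟩
  invFun s := by
    refine ⟨fun i => (Multiset.sort s.1 (· ≤ ·)).get ⟨i, ?_⟩, ?_⟩
    · have := s.2
      rw [← Multiset.length_sort (α := Fin c) (· ≤ ·)] at this
      omega
    · intro a b hab
      rcases eq_or_lt_of_le hab with h | h
      · simp [h]
      · exact (Multiset.pairwise_sort s.1 (· ≤ ·)).rel_get_of_lt (Fin.mk_lt_mk.mpr h)
  left_inv f := by
    have hs : Multiset.sort (↑(List.ofFn f.1) : Multiset (Fin c)) (· ≤ ·) = List.ofFn f.1 := by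
      apply List.Perm.eq_of_pairwise' (r := (· ≤ ·))
      · exact Multiset.pairwise_sort _ _
      · exact (List.sortedLE_ofFn_iff.mpr f.2).pairwise
      · exact Multiset.coe_eq_coe.mp (Multiset.sort_eq _ _)
    apply Subtype.ext; funext i
    apply Fin.ext
    simp only [List.get_eq_getElem, hs, List.getElem_ofFn]
  right_inv s := by
    apply Subtype.ext
    have hlen : (Multiset.sort s.1 (· ≤ ·)).length = n := by
      rw [Multiset.length_sort]; exact s.2
    have key : List.ofFn (fun i : Fin n => (Multiset.sort s.1 (· ≤ ·)).get ⟨i, by omega⟩)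
        = Multiset.sort s.1 (· ≤ ·) := by
      apply List.ext_get (by simpa using hlen)
      intro i h1 h2
      simp [List.get_ofFn]
    show ((List.ofFn _ : List (Fin c)) : Multiset (Fin c)) = s.1
    rw [show (List.ofFn _ : List (Fin c)) = _ from key]
    exact Multiset.sort_eq _ _

theorem card_mono' (n c : ℕ) : Nat.card {g : Fin n → Fin c // Monotone g} = (c + n - 1).choose n := by
  rw [Nat.card_congr (monoEquivSym n c), Nat.card_eq_fintype_card, Sym.card_sym_eq_choose]
  simp

theorem card_avoid_succ (N k : ℕ) :
    Nat.card {σ : Fin (N+1) → Fin k // Avoids121 σ}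
      = ∑ j ∈ Finset.range k, (2 * j + N).choose (2 * j) := by
  classical
  rw [Nat.card_congr (valleyEquiv N k)]
  rw [Nat.card_eq_fintype_card, Fintype.card_sigma]
  have h1 : ∀ j : Fin k, Fintype.card {g : Fin N → Fin (2 * (j : ℕ) + 1) // Monotone g}
      = (2 * (j : ℕ) + N).choose (2 * (j : ℕ)) := by
    intro j
    rw [← Nat.card_eq_fintype_card, card_mono']
    rw [show (2 * (j : ℕ) + 1) + N - 1 = 2 * (j : ℕ) + N by omega]
    rw [← Nat.choose_symm (by omega : 2 * (j : ℕ) ≤ 2 * (j : ℕ) + N)]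
    congr 1
    omega
  rw [Finset.sum_congr rfl (fun j _ => h1 j)]
  exact Fin.sum_univ_eq_sum_range (fun j => (2 * j + N).choose (2 * j)) k

theorem card_avoid_zero (k : ℕ) :
    Nat.card {σ : Fin 0 → Fin k // Avoids121 σ} = 1 := by
  have : Unique {σ : Fin 0 → Fin k // Avoids121 σ} := by
    refine ⟨⟨⟨fun i => i.elim0, ?_⟩⟩, ?_⟩
    · rintro ⟨i, _⟩; exact i.elim0
    · rintro ⟨σ, _⟩
      apply Subtype.ext
      funext i
      exact i.elim0
  rw [Nat.card_unique]

/-- The generating function `B_k(x) = Σ_{n≥0} b(n;k) xⁿ` where `b(n;k)` is the number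
of words `Fin n → Fin k` avoiding the pattern 1'-2-1''. -/
noncomputable def B (k : ℕ) : PowerSeries ℚ :=
  PowerSeries.mk fun n => (Nat.card {σ : Fin n → Fin k // Avoids121 σ} : ℚ)

open PowerSeries

lemma B_eq (k : ℕ) :
    B k = 1 + X * ∑ j ∈ Finset.range k,
      ((invOneSubPow ℚ (2 * j + 1) : (PowerSeries ℚ)ˣ) : PowerSeries ℚ) := by
  ext n
  rcases n with _ | n
  · simp only [B, coeff_mk, card_avoid_zero, map_add, coeff_zero_eq_constantCoeff]
    simp
  · simp only [B, coeff_mk, card_avoid_succ, map_add, coeff_succ_X_mul]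
    have h1 : (coeff (R := ℚ) (n+1)) 1 = 0 := by
      rw [coeff_one]
      simp
    rw [h1, map_sum]
    have h2 : ∀ j ∈ Finset.range k,
        (coeff n) ((invOneSubPow ℚ (2 * j + 1) : (PowerSeries ℚ)ˣ) : PowerSeries ℚ)
          = ((2 * j + n).choose (2 * j) : ℚ) := by
      intro j _
      rw [invOneSubPow_val_succ_eq_mk_add_choose, coeff_mk]
    rw [Finset.sum_congr rfl h2]
    push_cast
    ring

lemma sum_range_even_odd {M : Type*} [AddCommMonoid M] (f : ℕ → M) (K : ℕ) :
    ∑ r ∈ Finset.range (2 * K + 1), f r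
      = ∑ i ∈ Finset.range (K + 1), f (2 * i) + ∑ i ∈ Finset.range K, f (2 * i + 1) := by
  induction K with
  | zero => simp
  | succ K ih =>
    rw [show 2 * (K + 1) + 1 = (2 * K + 1) + 1 + 1 from by ring]
    rw [Finset.sum_range_succ, Finset.sum_range_succ, ih]
    rw [Finset.sum_range_succ (fun i => f (2 * i)) (K + 1),
      Finset.sum_range_succ (fun i => f (2 * i + 1)) K]
    rw [show 2 * (K + 1) = 2 * K + 1 + 1 from by ring]
    abel

theorem stmt0 (k : ℕ) (hk : 1 ≤ k) :
    (1 - PowerSeries.X) ^ (2 * k - 1) * B k =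
      1 - ∑ j ∈ Finset.Icc 1 (k - 1),
        (PowerSeries.X : PowerSeries ℚ) * (1 - PowerSeries.X) ^ (2 * k - 1 - 2 * j) := by
  obtain ⟨K, rfl⟩ : ∃ K, k = K + 1 := ⟨k - 1, by omega⟩
  rw [B_eq]
  have hM : 2 * (K + 1) - 1 = 2 * K + 1 := by omega
  rw [hM]
  -- left side expansion
  have hterm : ∀ j ∈ Finset.range (K + 1),
      (1 - X : PowerSeries ℚ) ^ (2 * K + 1) * (X *
        ((invOneSubPow ℚ (2 * j + 1) : (PowerSeries ℚ)ˣ) : PowerSeries ℚ))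
        = X * (1 - X) ^ (2 * (K - j)) := by
    intro j hj
    rw [Finset.mem_range] at hj
    have hu : (1 - X : PowerSeries ℚ) ^ (2 * j + 1) *
        ((invOneSubPow ℚ (2 * j + 1) : (PowerSeries ℚ)ˣ) : PowerSeries ℚ) = 1 := by
      rw [← invOneSubPow_inv_eq_one_sub_pow]
      exact (invOneSubPow ℚ (2 * j + 1)).inv_val
    rw [show 2 * K + 1 = 2 * (K - j) + (2 * j + 1) from by omega, pow_add]
    calc (1 - X : PowerSeries ℚ) ^ (2 * (K - j)) * (1 - X) ^ (2 * j + 1) *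
          (X * ((invOneSubPow ℚ (2 * j + 1) : (PowerSeries ℚ)ˣ) : PowerSeries ℚ))
        = X * ((1 - X) ^ (2 * (K - j)) * ((1 - X) ^ (2 * j + 1) *
            ((invOneSubPow ℚ (2 * j + 1) : (PowerSeries ℚ)ˣ) : PowerSeries ℚ))) := by ring
      _ = X * (1 - X) ^ (2 * (K - j)) := by rw [hu, mul_one]
  rw [mul_add, mul_one, Finset.mul_sum, Finset.mul_sum]
  have hrefl := Finset.sum_range_reflect
    (fun i => (X : PowerSeries ℚ) * (1 - X) ^ (2 * i)) (K + 1)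
  have hleft : ∑ j ∈ Finset.range (K + 1), (1 - X : PowerSeries ℚ) ^ (2 * K + 1) *
      (X * ((invOneSubPow ℚ (2 * j + 1) : (PowerSeries ℚ)ˣ) : PowerSeries ℚ))
      = ∑ i ∈ Finset.range (K + 1), X * (1 - X) ^ (2 * i) := by
    rw [Finset.sum_congr rfl hterm, ← hrefl]
    apply Finset.sum_congr rfl
    intro i hi
    rw [Finset.mem_range] at hi
    congr 2 <;> omega
  rw [hleft]
  -- right side reindex
  have hrefl2 := Finset.sum_range_reflect
    (fun i => (X : PowerSeries ℚ) * (1 - X) ^ (2 * i + 1)) K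
  have hright : ∑ j ∈ Finset.Icc 1 (K + 1 - 1),
      (X : PowerSeries ℚ) * (1 - X) ^ (2 * K + 1 - 2 * j)
      = ∑ i ∈ Finset.range K, X * (1 - X) ^ (2 * i + 1) := by
    rw [show K + 1 - 1 = K from rfl]
    rw [← Finset.Ico_add_one_right_eq_Icc, Finset.sum_Ico_eq_sum_range]
    rw [← hrefl2]
    apply Finset.sum_congr rfl
    intro i hi
    rw [Finset.mem_range] at hi
    congr 2 <;> omega
  rw [hright]
  -- the geometric series identity
  have geom := geom_sum_mul (1 - X : PowerSeries ℚ) (2 * K + 1)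
  have merge : (X : PowerSeries ℚ) * ∑ r ∈ Finset.range (2 * K + 1), (1 - X) ^ r
      = ∑ i ∈ Finset.range (K + 1), X * (1 - X) ^ (2 * i)
        + ∑ i ∈ Finset.range K, X * (1 - X) ^ (2 * i + 1) := by
    rw [Finset.mul_sum]
    exact sum_range_even_odd (fun r => (X : PowerSeries ℚ) * (1 - X) ^ r) K
  linear_combination (-1 : PowerSeries ℚ) * merge - geom
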